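/- Let W_E be a BSC(p) viewed as addition of Bernoulli(p) noise, let C_E ⊆ C_B ⊆ F_2^n be nested linear codes, let M be uniform on the cosets C_B/C_E, X = X' + T where X' is uniform on C_E and T is the coset leader of M (all independent of the noise V ~ Bern(p)^{⊗n}), and Z = X + V. Then the information leakage satisfies I(M; Z) ≤ D(P_{X'+V} || U_{F_2^n}), i.e., leakage is bounded by the KL divergence of the channel output under the uniform distribution on C_E from the uniform distribution on F_2^n. -/

import Mathlib

open scoped Classical

/-- Hamming weight of a binary vector. -/
noncomputable def wt {n : ℕ} (v : Fin n → ZMod 2) : ℕ :=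
  (Finset.univ.filter fun j => v j = 1).card

/-- Gibbs' inequality / nonnegativity of KL divergence against a uniform reference. -/
lemma gibbs_aux {α : Type*} [Fintype α] (u : ℝ) (hu : 0 < u) (f : α → ℝ)
    (hf : ∀ x, 0 ≤ f x) (hsum : ∑ x, f x = 1) (husum : ∑ _x : α, u = 1) :
    0 ≤ ∑ x, f x * Real.logb 2 (f x / u) := by
  have key : ∀ x, f x - u ≤ f x * Real.log (f x / u) := by
    intro x
    rcases eq_or_lt_of_le (hf x) with h | h
    · simp [← h]; linarith
    · have h1 : Real.log (u / f x) ≤ u / f x - 1 :=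
        Real.log_le_sub_one_of_pos (by positivity)
      have h2 : f x * Real.log (u / f x) ≤ u - f x := by
        have h2' := mul_le_mul_of_nonneg_left h1 (le_of_lt h)
        calc f x * Real.log (u / f x) ≤ f x * (u / f x - 1) := h2'
          _ = u - f x := by field_simp
      have h3 : Real.log (u / f x) = - Real.log (f x / u) := by
        rw [← Real.log_inv]; congr 1; field_simp
      rw [h3] at h2; linarith
  have hlog : 0 ≤ ∑ x, f x * Real.log (f x / u) :=
    calc (0:ℝ) = ∑ x, f x - ∑ _x : α, u := by rw [hsum, husum]; ring
      _ = ∑ x, (f x - u) := by rw [Finset.sum_sub_distrib]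
      _ ≤ ∑ x, f x * Real.log (f x / u) := Finset.sum_le_sum fun x _ => key x
  have heq : ∑ x, f x * Real.logb 2 (f x / u)
      = (∑ x, f x * Real.log (f x / u)) / Real.log 2 := by
    rw [Finset.sum_div]
    refine Finset.sum_congr rfl fun x _ => ?_
    rw [Real.logb]; ring
  rw [heq]
  exact div_nonneg hlog (Real.log_nonneg (by norm_num))

/-- Leakage bound for coset coding on a BSC(p): with nested codes `C_E ⊆ C_B`, message `M`
uniform over the cosets of `C_E` in `C_B` (with coset-leader system `T`), `X` uniform in the
coset of `M`, additive noise `V ~ Bern(p)^{⊗n}` and `Z = X + V`, the leakage satisfies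
`I(M; Z) ≤ D(P_{X'+V} ‖ U_{F_2^n})` where `X'` is uniform on `C_E`. -/
theorem stmt_15 (n : ℕ) (p : ℝ) (hp0 : 0 < p) (hp1 : p < 1)
    (CE CB : Submodule (ZMod 2) (Fin n → ZMod 2)) (hEB : CE ≤ CB)
    {M : Type*} [Fintype M] [Nonempty M] (T : M → (Fin n → ZMod 2))
    (hT1 : ∀ m, T m ∈ CB)
    (hT2 : ∀ m m', T m - T m' ∈ CE → m = m')
    (hT3 : ∀ x ∈ CB, ∃ m, x - T m ∈ CE)
    (β : (Fin n → ZMod 2) → ℝ)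
    (hβ : ∀ v, β v = p ^ wt v * (1 - p) ^ (n - wt v))
    (PMZ : M × (Fin n → ZMod 2) → ℝ)
    (hPMZ : ∀ m z, PMZ (m, z) = (1 / (Fintype.card M : ℝ)) *
      ∑ x : Fin n → ZMod 2,
        (if x - T m ∈ CE then (1 / (Nat.card CE : ℝ)) * β (z - x) else 0)) :
    (∑ m, ∑ z, PMZ (m, z) * Real.logb 2 (PMZ (m, z) /
        ((∑ z', PMZ (m, z')) * (∑ m', PMZ (m', z)))))
      ≤ ∑ z : Fin n → ZMod 2,
          (∑ c, (if c ∈ CE then (1 / (Nat.card CE : ℝ)) * β (z - c) else 0))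
            * Real.logb 2
              ((∑ c, (if c ∈ CE then (1 / (Nat.card CE : ℝ)) * β (z - c) else 0))
                / ((1 : ℝ) / 2 ^ n)) := by
  set cM : ℝ := (Fintype.card M : ℝ) with hcM
  have hcM0 : 0 < cM := by rw [hcM]; exact_mod_cast Fintype.card_pos
  set N : ℝ := (Nat.card CE : ℝ) with hN
  have hN0 : 0 < N := by rw [hN]; exact_mod_cast Nat.card_pos
  set Q : (Fin n → ZMod 2) → ℝ :=
    fun z => ∑ c, (if c ∈ CE then (1 / N) * β (z - c) else 0) with hQ
  -- basic facts about β
  have hβnn : ∀ v, 0 ≤ β v := by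
    intro v; rw [hβ]
    exact mul_nonneg (pow_nonneg hp0.le _) (pow_nonneg (by linarith) _)
  have hβprod : ∀ v, β v = ∏ j : Fin n, (if v j = 1 then p else 1 - p) := by
    intro v
    rw [hβ, Finset.prod_ite, Finset.prod_const, Finset.prod_const]
    have h1 : (Finset.univ.filter fun j => v j = 1).card = wt v := rfl
    have h2 : (Finset.univ.filter fun j => ¬ v j = 1).card = n - wt v := by
      have h3 := Finset.card_filter_add_card_filter_not
        (s := (Finset.univ : Finset (Fin n))) (fun j => v j = 1)
      simp only [Finset.card_univ, Fintype.card_fin] at h3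
      rw [← h1]; omega
    rw [h1, h2]
  have hβsum : ∑ v : Fin n → ZMod 2, β v = 1 := by
    calc ∑ v : Fin n → ZMod 2, β v
        = ∑ v : Fin n → ZMod 2, ∏ j : Fin n, (if v j = 1 then p else 1 - p) :=
          Finset.sum_congr rfl fun v _ => hβprod v
      _ = ∏ _j : Fin n, ∑ a : ZMod 2, (if a = 1 then p else 1 - p) :=
          (Fintype.prod_sum fun _ a => if a = 1 then p else 1 - p).symm
      _ = ∏ _j : Fin n, (1:ℝ) := by
          refine Finset.prod_congr rfl fun j _ => ?_
          show (if (0:ZMod 2) = 1 then p else 1-p) + ((if (1:ZMod 2) = 1 then p else 1-p) + 0) = 1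
          norm_num
      _ = 1 := Finset.prod_const_one
  -- basic facts about Q
  have hQnn : ∀ z, 0 ≤ Q z := by
    intro z
    refine Finset.sum_nonneg fun c _ => ?_
    split
    · have := hβnn (z - c); positivity
    · exact le_refl 0
  have hQshift : ∀ (t : Fin n → ZMod 2) (g : (Fin n → ZMod 2) → ℝ),
      ∑ z, g (z - t) = ∑ z, g z := fun t g =>
    Fintype.sum_equiv (Equiv.subRight t) _ _ (fun _ => rfl)
  have hQsum : ∑ z, Q z = 1 := by
    rw [hQ, Finset.sum_comm]
    have step : ∀ c : Fin n → ZMod 2,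
        (∑ z, if c ∈ CE then (1 / N) * β (z - c) else 0)
          = (if c ∈ CE then (1 / N) else 0) := by
      intro c
      split
      · rw [← Finset.mul_sum, hQshift c β, hβsum, mul_one]
      · exact Finset.sum_const_zero
    rw [Finset.sum_congr rfl fun c _ => step c, Finset.sum_ite, Finset.sum_const,
      Finset.sum_const_zero, add_zero, nsmul_eq_mul]
    have hcard : ((Finset.univ.filter fun c => c ∈ CE).card : ℝ) = N := by
      rw [hN, Nat.card_eq_fintype_card, Fintype.card_subtype]
    rw [hcard]
    field_simp
  -- PMZ in terms of Q
  have hPQ : ∀ m z, PMZ (m, z) = (1 / cM) * Q (z - T m) := by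
    intro m z
    rw [hPMZ]
    congr 1
    rw [hQ]
    refine Fintype.sum_equiv (Equiv.subRight (T m)) _ _ fun x => ?_
    simp only [Equiv.subRight_apply]
    rw [show z - T m - (x - T m) = z - x from by abel]
  have hPz : ∀ m, ∑ z', PMZ (m, z') = 1 / cM := by
    intro m
    calc ∑ z', PMZ (m, z') = ∑ z', (1 / cM) * Q (z' - T m) :=
          Finset.sum_congr rfl fun z _ => hPQ m z
      _ = (1 / cM) * ∑ z', Q (z' - T m) := by rw [Finset.mul_sum]
      _ = 1 / cM := by rw [hQshift (T m) Q, hQsum, mul_one]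
  -- output distribution R
  set R : (Fin n → ZMod 2) → ℝ := fun z => ∑ m', PMZ (m', z) with hR
  have hRQ : ∀ z, R z = ∑ m', (1 / cM) * Q (z - T m') := by
    intro z; rw [hR]
    exact Finset.sum_congr rfl fun m' _ => hPQ m' z
  have hRnn : ∀ z, 0 ≤ R z := by
    intro z; rw [hRQ]
    refine Finset.sum_nonneg fun m' _ => ?_
    have := hQnn (z - T m'); positivity
  have hRsum : ∑ z, R z = 1 := by
    rw [hR, Finset.sum_comm]
    rw [Finset.sum_congr rfl fun m _ => hPz m, Finset.sum_const, nsmul_eq_mul,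
      Finset.card_univ, ← hcM]
    field_simp
  have hRge : ∀ m z, (1 / cM) * Q (z - T m) ≤ R z := by
    intro m z
    rw [hRQ]
    refine Finset.single_le_sum (f := fun m' => (1 / cM) * Q (z - T m')) ?_ (Finset.mem_univ m)
    intro m' _
    have := hQnn (z - T m'); positivity
  -- pointwise decomposition of the mutual information summand
  have hterm : ∀ m z, PMZ (m, z) * Real.logb 2 (PMZ (m, z) /
        ((∑ z', PMZ (m, z')) * (∑ m', PMZ (m', z))))
      = (1 / cM) * (Q (z - T m) * Real.logb 2 (Q (z - T m) / ((1:ℝ) / 2 ^ n)))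
        - (1 / cM) * (Q (z - T m) * Real.logb 2 (R z / ((1:ℝ) / 2 ^ n))) := by
    intro m z
    have hRz : ∑ m', PMZ (m', z) = R z := rfl
    rw [hPQ, hPz, hRz]
    rcases eq_or_lt_of_le (hQnn (z - T m)) with h | h
    · rw [← h]; simp
    · have hR0 : 0 < R z := lt_of_lt_of_le (by positivity) (hRge m z)
      have hu : ((1:ℝ) / 2 ^ n) ≠ 0 := by positivity
      have hratio : (1 / cM * Q (z - T m)) / (1 / cM * R z) = Q (z - T m) / R z :=
        mul_div_mul_left _ _ (by positivity)
      rw [hratio]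
      have e1 : Real.logb 2 (Q (z - T m) / R z)
          = Real.logb 2 (Q (z - T m) / ((1:ℝ) / 2 ^ n))
            - Real.logb 2 (R z / ((1:ℝ) / 2 ^ n)) := by
        rw [Real.logb_div (ne_of_gt h) (ne_of_gt hR0),
          Real.logb_div (ne_of_gt h) hu, Real.logb_div (ne_of_gt hR0) hu]
        ring
      rw [e1]; ring
  -- assemble
  have husum : ∑ _z : Fin n → ZMod 2, ((1:ℝ) / 2 ^ n) = 1 := by
    rw [Finset.sum_const, nsmul_eq_mul, Finset.card_univ]
    have : (Fintype.card (Fin n → ZMod 2) : ℝ) = 2 ^ n := by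
      rw [Fintype.card_fun]
      simp
    rw [this]
    field_simp
  have hGibbs : 0 ≤ ∑ z, R z * Real.logb 2 (R z / ((1:ℝ) / 2 ^ n)) :=
    gibbs_aux ((1:ℝ) / 2 ^ n) (by positivity) R hRnn hRsum husum
  calc ∑ m, ∑ z, PMZ (m, z) * Real.logb 2 (PMZ (m, z) /
        ((∑ z', PMZ (m, z')) * (∑ m', PMZ (m', z))))
      = ∑ m, ∑ z, ((1 / cM) * (Q (z - T m) * Real.logb 2 (Q (z - T m) / ((1:ℝ) / 2 ^ n)))
          - (1 / cM) * (Q (z - T m) * Real.logb 2 (R z / ((1:ℝ) / 2 ^ n)))) :=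
        Finset.sum_congr rfl fun m _ => Finset.sum_congr rfl fun z _ => hterm m z
    _ = (∑ m, ∑ z, (1 / cM) * (Q (z - T m) * Real.logb 2 (Q (z - T m) / ((1:ℝ) / 2 ^ n))))
          - ∑ m, ∑ z, (1 / cM) * (Q (z - T m) * Real.logb 2 (R z / ((1:ℝ) / 2 ^ n))) := by
        rw [← Finset.sum_sub_distrib]
        exact Finset.sum_congr rfl fun m _ => Finset.sum_sub_distrib _ _
    _ = (∑ z, Q z * Real.logb 2 (Q z / ((1:ℝ) / 2 ^ n)))
          - ∑ z, R z * Real.logb 2 (R z / ((1:ℝ) / 2 ^ n)) := by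
        congr 1
        · have inner : ∀ m : M, ∑ z, (1 / cM) * (Q (z - T m) * Real.logb 2 (Q (z - T m) / ((1:ℝ) / 2 ^ n)))
              = (1 / cM) * ∑ z, Q z * Real.logb 2 (Q z / ((1:ℝ) / 2 ^ n)) := by
            intro m
            rw [← Finset.mul_sum, hQshift (T m) (fun z => Q z * Real.logb 2 (Q z / ((1:ℝ) / 2 ^ n)))]
          rw [Finset.sum_congr rfl fun m _ => inner m, Finset.sum_const, nsmul_eq_mul,
            Finset.card_univ, ← hcM]
          field_simp
          exact Finset.sum_congr rfl fun x _ => by rw [mul_comm (Q x) (2 ^ n)]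
        · rw [Finset.sum_comm]
          refine Finset.sum_congr rfl fun z _ => ?_
          rw [hRQ z, Finset.sum_mul]
          exact Finset.sum_congr rfl fun m _ => by ring
    _ ≤ ∑ z, Q z * Real.logb 2 (Q z / ((1:ℝ) / 2 ^ n)) := by linarith
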